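/- arXiv:2010.01322 — 6 statements merged into one kernel-verified Lean document; each statement's English description precedes it below -/
import Mathlib

section
/- Let k ≥ 1, let p₁,…,p_k ∈ ℝ³, let m ≥ 0, and let x ∈ ℝ³. Assume that either (a) ‖x‖ > (4/3)·max_i ‖p_i‖, or (b) x ≠ 0 and for every i either p_i = 0 or ‖x‖ < ‖p_i‖. Then 4m + ∑_{i=1}^k (3‖x‖² − 7⟪x, p_i⟫ + 4‖p_i‖²) / (2‖x − p_i‖³) > 0. (Note that under either hypothesis x ≠ p_i for all i, so all denominators are nonzero.) -/
open RealInnerProductSpace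

/-- **3-convexity of circle-invariant spheres in multi-Eguchi--Hanson/multi-Taub--NUT.**
For the Gibbons--Hawking potential `φ(x) = m + ∑ i, 1/(2‖x - p i‖)`, if either
`‖x‖ > (4/3)·max_i ‖p i‖`, or `x ≠ 0` and every `p i` is `0` or has `‖x‖ < ‖p i‖`, then
`⟪∇φ(x), x⟫ + 4φ(x) = 4m + ∑ i, (3‖x‖² − 7⟪x, p i⟫ + 4‖p i‖²)/(2‖x − p i‖³) > 0`. -/
theorem stmt_1 (k : ℕ) (hk : 1 ≤ k) (p : Fin k → EuclideanSpace ℝ (Fin 3))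
    (m : ℝ) (hm : 0 ≤ m) (x : EuclideanSpace ℝ (Fin 3))
    (h : ‖x‖ > 4 / 3 * (Finset.univ.sup' (Finset.univ_nonempty_iff.mpr ⟨⟨0, hk⟩⟩)
            fun i => ‖p i‖)
        ∨ (x ≠ 0 ∧ ∀ i, p i = 0 ∨ ‖x‖ < ‖p i‖)) :
    0 < 4 * m + ∑ i : Fin k,
        (3 * ‖x‖ ^ 2 - 7 * ⟪x, p i⟫ + 4 * ‖p i‖ ^ 2) / (2 * ‖x - p i‖ ^ 3) := by
  have key : ∀ i : Fin k,
      0 < (3 * ‖x‖ ^ 2 - 7 * ⟪x, p i⟫ + 4 * ‖p i‖ ^ 2) / (2 * ‖x - p i‖ ^ 3) := by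
    intro i
    have hip : ⟪x, p i⟫ ≤ ‖x‖ * ‖p i‖ := real_inner_le_norm x (p i)
    have hx0 : (0:ℝ) ≤ ‖x‖ := norm_nonneg _
    have hp0 : (0:ℝ) ≤ ‖p i‖ := norm_nonneg _
    have hden : ∀ (hne : x ≠ p i), 0 < 2 * ‖x - p i‖ ^ 3 := by
      intro hne
      have : 0 < ‖x - p i‖ := by
        rw [norm_pos_iff, sub_ne_zero]; exact hne
      positivity
    rcases h with h | ⟨hx, hall⟩
    · have hpi : ‖p i‖ ≤ Finset.univ.sup'
          (Finset.univ_nonempty_iff.mpr ⟨⟨0, hk⟩⟩) fun i => ‖p i‖ :=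
        Finset.le_sup' (fun i => ‖p i‖) (Finset.mem_univ i)
      have hlt : (4:ℝ)/3 * ‖p i‖ < ‖x‖ := lt_of_le_of_lt (by linarith) h
      have hne : x ≠ p i := by
        intro e
        rw [e] at hlt
        linarith
      exact div_pos (by nlinarith) (hden hne)
    · have hxpos : 0 < ‖x‖ := norm_pos_iff.mpr hx
      rcases hall i with hz | hlt
      · rw [hz]
        simp only [inner_zero_right, norm_zero, sub_zero]
        have : 0 < 2 * ‖x‖ ^ 3 := by positivity
        apply div_pos _ this
        nlinarith
      · have hne : x ≠ p i := by
          intro e; rw [e] at hlt; exact lt_irrefl _ hlt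
        exact div_pos (by nlinarith) (hden hne)
  have hsum : 0 < ∑ i : Fin k,
      (3 * ‖x‖ ^ 2 - 7 * ⟪x, p i⟫ + 4 * ‖p i‖ ^ 2) / (2 * ‖x - p i‖ ^ 3) :=
    Finset.sum_pos (fun i _ => key i) (Finset.univ_nonempty_iff.mpr ⟨⟨0, hk⟩⟩)
  linarith
end

section
/- Let k ≥ 1, let p₁,…,p_k ∈ ℝ³, let m ≥ 0, and let x ∈ ℝ³ with x ≠ p_i for all i. Write ρ(y) = √(y₁² + y₂²) for y ∈ ℝ³. Assume that either (a) ρ(x) > 2·max_i ρ(p_i) and ρ(x) > 0, or (b) ρ(x) > 0 and for every i either ρ(p_i) = 0 or ρ(x) < ρ(p_i). Then 2m + ∑_{i=1}^k (2‖x − p_i‖² − x₁(x₁ − (p_i)₁) − x₂(x₂ − (p_i)₂)) / (2‖x − p_i‖³) > 0. -/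
open RealInnerProductSpace

private lemma auxA (x0 x1 p0 p1 c : ℝ) (hc : 0 ≤ c) (h : 4*(p0^2+p1^2) < x0^2+x1^2) :
    0 < (x0-p0)^2+(x1-p1)^2 + c - (p0*(x0-p0) + p1*(x1-p1)) := by
  nlinarith [sq_nonneg (p0*x1 - p1*x0), sq_nonneg (x0 - 2*p0), sq_nonneg (x1 - 2*p1),
    sq_nonneg (x0-p0), sq_nonneg (x1-p1), sq_nonneg (p0+p1), sq_nonneg (p0-p1)]

private lemma auxB (x0 x1 p0 p1 c : ℝ) (hc : 0 ≤ c) (h1 : 0 < x0^2+x1^2)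
    (h2 : x0^2+x1^2 < p0^2+p1^2) :
    0 < (x0-p0)^2+(x1-p1)^2 + c - (p0*(x0-p0) + p1*(x1-p1)) := by
  nlinarith [sq_nonneg (p0*x1 - p1*x0), sq_nonneg (x0-p0), sq_nonneg (x1-p1),
    sq_nonneg (p0*x0+p1*x1)]

private lemma auxC (x0 x1 p0 p1 c : ℝ) (hc : 0 ≤ c) (h1 : 0 < x0^2+x1^2)
    (h0 : p0^2+p1^2 = 0) :
    0 < (x0-p0)^2+(x1-p1)^2 + c - (p0*(x0-p0) + p1*(x1-p1)) := by
  have hp0 : p0 = 0 := by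
    have : p0 ^ 2 = 0 := le_antisymm (by nlinarith [sq_nonneg p1]) (sq_nonneg _)
    exact pow_eq_zero_iff (by norm_num) |>.mp this
  have hp1 : p1 = 0 := by
    have : p1 ^ 2 = 0 := le_antisymm (by nlinarith [sq_nonneg p0]) (sq_nonneg _)
    exact pow_eq_zero_iff (by norm_num) |>.mp this
  subst hp0; subst hp1
  nlinarith

/-- **3-convexity of circle-invariant cylinders in multi-Eguchi--Hanson/multi-Taub--NUT.**
For the Gibbons--Hawking potential `φ(x) = m + ∑ i, 1/(2‖x - p i‖)` and
`ρ(y) = √(y₁² + y₂²)`, if either `ρ(x) > 2·max_i ρ(p i)` with `ρ(x) > 0`, or `ρ(x) > 0`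
and every `p i` has `ρ(p i) = 0` or `ρ(x) < ρ(p i)`, then
`ρ·(⟪∇φ(x), ν⟫ + 2φ(x)/ρ) = 2m + ∑ i, (2‖x − p i‖² − x₁(x₁ − (p i)₁) − x₂(x₂ − (p i)₂))/(2‖x − p i‖³) > 0`. -/
theorem stmt_2 (k : ℕ) (hk : 1 ≤ k) (p : Fin k → EuclideanSpace ℝ (Fin 3))
    (m : ℝ) (hm : 0 ≤ m) (x : EuclideanSpace ℝ (Fin 3)) (hxp : ∀ i, x ≠ p i)
    (ρ : EuclideanSpace ℝ (Fin 3) → ℝ)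
    (hρ : ∀ y, ρ y = Real.sqrt (y 0 ^ 2 + y 1 ^ 2))
    (h : (ρ x > 2 * (Finset.univ.sup' (Finset.univ_nonempty_iff.mpr ⟨⟨0, hk⟩⟩)
              fun i => ρ (p i)) ∧ ρ x > 0)
        ∨ (ρ x > 0 ∧ ∀ i, ρ (p i) = 0 ∨ ρ x < ρ (p i))) :
    0 < 2 * m + ∑ i : Fin k,
        (2 * ‖x - p i‖ ^ 2 - x 0 * (x 0 - p i 0) - x 1 * (x 1 - p i 1)) /
          (2 * ‖x - p i‖ ^ 3) := by
  have hr : ∀ i, (0:ℝ) < ‖x - p i‖ := by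
    intro i
    have : x - p i ≠ 0 := sub_ne_zero.mpr (hxp i)
    exact norm_pos_iff.mpr this
  have hnorm : ∀ i, ‖x - p i‖^2 = (x 0 - p i 0)^2 + (x 1 - p i 1)^2 + (x 2 - p i 2)^2 := by
    intro i
    rw [EuclideanSpace.norm_eq, Real.sq_sqrt (by positivity)]
    simp [Fin.sum_univ_three, sq_abs]
  have key : ∀ i ∈ Finset.univ, 0 < (2 * ‖x - p i‖ ^ 2 - x 0 * (x 0 - p i 0)
      - x 1 * (x 1 - p i 1)) / (2 * ‖x - p i‖ ^ 3) := by
    intro i _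
    apply div_pos _ (by have := hr i; positivity)
    have hX : x 0 ^ 2 + x 1 ^ 2 = (ρ x)^2 := by
      rw [hρ, Real.sq_sqrt (by positivity)]
    have hP : p i 0 ^ 2 + p i 1 ^ 2 = (ρ (p i))^2 := by
      rw [hρ, Real.sq_sqrt (by positivity)]
    have hρp : 0 ≤ ρ (p i) := by rw [hρ]; positivity
    have hc : (0:ℝ) ≤ 2*(x 2 - p i 2)^2 := by positivity
    have hmain : 0 < (x 0 - p i 0)^2+(x 1 - p i 1)^2 + 2*(x 2 - p i 2)^2
        - (p i 0*(x 0 - p i 0) + p i 1*(x 1 - p i 1)) := by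
      rcases h with ⟨ha, hx0⟩ | ⟨hx0, hb⟩
      · have hle : ρ (p i) ≤ Finset.univ.sup' (Finset.univ_nonempty_iff.mpr ⟨⟨0, hk⟩⟩)
            (fun i => ρ (p i)) := Finset.le_sup' (fun j => ρ (p j)) (Finset.mem_univ i)
        exact auxA _ _ _ _ _ hc (by nlinarith)
      · rcases hb i with h0 | hlt
        · exact auxC _ _ _ _ _ hc (by nlinarith) (by rw [hP, h0]; ring)
        · exact auxB _ _ _ _ _ hc (by nlinarith) (by nlinarith)
    have hn := hnorm i
    nlinarith [hmain, hn]
  have hsum := Finset.sum_pos key (Finset.univ_nonempty_iff.mpr ⟨⟨0, hk⟩⟩)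
  linarith
end

section
/- Let k ≥ 1, let p₁,…,p_k ∈ ℝ³, let m ≥ 0, and let x ∈ ℝ³. Assume that either (a) ‖x‖ > 2·max_i ‖p_i‖ and ‖x‖ > 0, or (b) x ≠ 0 and for every i either p_i = 0 or ‖x‖ < ‖p_i‖. Then 2m + ∑_{i=1}^k (‖x‖² − 3⟪x, p_i⟫ + 2‖p_i‖²) / (2‖x − p_i‖³) > 0. -/
open RealInnerProductSpace

/-- **Convexity of circle-invariant spheres: positivity of the first minors.**
For the Gibbons--Hawking potential `φ(x) = m + ∑ i, 1/(2‖x - p i‖)`, if either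
`‖x‖ > 2·max_i ‖p i‖` with `‖x‖ > 0`, or `x ≠ 0` and every `p i` is `0` or has
`‖x‖ < ‖p i‖`, then
`⟪∇φ(x), x⟫ + 2φ(x) = 2m + ∑ i, (‖x‖² − 3⟪x, p i⟫ + 2‖p i‖²)/(2‖x − p i‖³) > 0`. -/
theorem stmt_4 (k : ℕ) (hk : 1 ≤ k) (p : Fin k → EuclideanSpace ℝ (Fin 3))
    (m : ℝ) (hm : 0 ≤ m) (x : EuclideanSpace ℝ (Fin 3))
    (h : (‖x‖ > 2 * (Finset.univ.sup' (Finset.univ_nonempty_iff.mpr ⟨⟨0, hk⟩⟩)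
              fun i => ‖p i‖) ∧ ‖x‖ > 0)
        ∨ (x ≠ 0 ∧ ∀ i, p i = 0 ∨ ‖x‖ < ‖p i‖)) :
    0 < 2 * m + ∑ i : Fin k,
        (‖x‖ ^ 2 - 3 * ⟪x, p i⟫ + 2 * ‖p i‖ ^ 2) / (2 * ‖x - p i‖ ^ 3) := by
  have key : ∀ i : Fin k,
      0 < (‖x‖ ^ 2 - 3 * ⟪x, p i⟫ + 2 * ‖p i‖ ^ 2) / (2 * ‖x - p i‖ ^ 3) := by
    intro i
    have hip : ⟪x, p i⟫ ≤ ‖x‖ * ‖p i‖ := real_inner_le_norm x (p i)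
    have hb0 : (0:ℝ) ≤ ‖p i‖ := norm_nonneg _
    rcases h with ⟨ha, hx⟩ | ⟨hx, hall⟩
    · have hsup : ‖p i‖ ≤ Finset.univ.sup'
          (Finset.univ_nonempty_iff.mpr ⟨⟨0, hk⟩⟩) (fun i => ‖p i‖) :=
        Finset.le_sup' (fun i => ‖p i‖) (Finset.mem_univ i)
      have hab : 2 * ‖p i‖ < ‖x‖ := by linarith
      have hne : x ≠ p i := by
        intro hxy; rw [hxy] at hab; linarith
      have hd : 0 < ‖x - p i‖ := by
        rwa [norm_sub_pos_iff]
      have hnum : 0 < ‖x‖ ^ 2 - 3 * ⟪x, p i⟫ + 2 * ‖p i‖ ^ 2 := by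
        nlinarith [sq_nonneg (‖x‖ - ‖p i‖)]
      exact div_pos hnum (by positivity)
    · rcases hall i with hp | hp
      · have hx0 : 0 < ‖x‖ := norm_pos_iff.mpr hx
        rw [hp]
        simp only [inner_zero_right, norm_zero, sub_zero]
        have h1 : 0 < ‖x‖ ^ 2 - 3 * 0 + 2 * (0:ℝ) ^ 2 := by nlinarith [pow_pos hx0 2]
        exact div_pos h1 (mul_pos two_pos (pow_pos hx0 3))
      · have hne : x ≠ p i := by
          intro hxy; rw [hxy] at hp; linarith
        have hd : 0 < ‖x - p i‖ := by rwa [norm_sub_pos_iff]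
        have hx0 : (0:ℝ) ≤ ‖x‖ := norm_nonneg _
        have hnum : 0 < ‖x‖ ^ 2 - 3 * ⟪x, p i⟫ + 2 * ‖p i‖ ^ 2 := by
          nlinarith
        exact div_pos hnum (by positivity)
  have hsum : 0 < ∑ i : Fin k,
      (‖x‖ ^ 2 - 3 * ⟪x, p i⟫ + 2 * ‖p i‖ ^ 2) / (2 * ‖x - p i‖ ^ 3) :=
    Finset.sum_pos (fun i _ => key i) (Finset.univ_nonempty_iff.mpr ⟨⟨0, hk⟩⟩)
  linarith
end

section
/- Let k ≥ 1, let p₁,…,p_k ∈ ℝ³, let m ≥ 0, set A = max_i ‖p_i‖, and let C ∈ ℝ satisfy C³ = 4C² + 5C + 2. Let x ∈ ℝ³ with ‖x‖ > C·A and ‖x‖ > 0, and x ≠ p_i for all i. Define φ(x) = m + ∑_{i=1}^k 1/(2‖x − p_i‖) and G(x) = −∑_{i=1}^k (x − p_i)/(2‖x − p_i‖³). Then ‖G(x)‖² + 2φ(x)·⟪G(x), x⟫/‖x‖² < 0. -/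
open RealInnerProductSpace

set_option maxHeartbeats 1000000

/-- **Determinant positivity for large spheres.** For the Gibbons--Hawking potential
`φ(x) = m + ∑ i, 1/(2‖x − p i‖)` with gradient `G(x) = −∑ i, (x − p i)/(2‖x − p i‖³)`,
`A = max_i ‖p i‖` and `C` the real root of `−x³ + 4x² + 5x + 2`, whenever `‖x‖ > C·A`
(and `‖x‖ > 0`, `x ≠ p i`) one has `‖G(x)‖² + 2φ(x)⟪G(x), x⟫/‖x‖² < 0`. -/
theorem stmt_5 (k : ℕ) (hk : 1 ≤ k) (p : Fin k → EuclideanSpace ℝ (Fin 3))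
    (m : ℝ) (hm : 0 ≤ m) (A C : ℝ)
    (hA : A = Finset.univ.sup' (Finset.univ_nonempty_iff.mpr ⟨⟨0, hk⟩⟩) fun i => ‖p i‖)
    (hC : C ^ 3 = 4 * C ^ 2 + 5 * C + 2)
    (x : EuclideanSpace ℝ (Fin 3)) (hx : ‖x‖ > C * A) (hx0 : ‖x‖ > 0)
    (hxp : ∀ i, x ≠ p i)
    (φ : ℝ) (hφ : φ = m + ∑ i : Fin k, (2 * ‖x - p i‖)⁻¹)
    (G : EuclideanSpace ℝ (Fin 3))
    (hG : G = -∑ i : Fin k, (2 * ‖x - p i‖ ^ 3)⁻¹ • (x - p i)) :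
    ‖G‖ ^ 2 + 2 * φ * ⟪G, x⟫ / ‖x‖ ^ 2 < 0 := by
  set r : ℝ := ‖x‖ with hr
  have hne : (Finset.univ : Finset (Fin k)).Nonempty := Finset.univ_nonempty_iff.mpr ⟨⟨0, hk⟩⟩
  have hpA : ∀ i, ‖p i‖ ≤ A :=
    fun i => hA ▸ Finset.le_sup' (fun j => ‖p j‖) (Finset.mem_univ i)
  have hA0 : 0 ≤ A := (norm_nonneg _).trans (hpA ⟨0, hk⟩)
  have hr2A : 2 * A < r := by
    rcases hA0.eq_or_lt with h | h
    · simpa [← h] using hx0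
    · have hC2 : 2 < C := by nlinarith [sq_nonneg (2*C+1), sq_nonneg (24*C+13)]
      nlinarith
  have hrA : A < r := by linarith
  have hd : ∀ i, 0 < ‖x - p i‖ := fun i => by
    rw [norm_pos_iff]; exact sub_ne_zero.mpr (hxp i)
  have hip : ∀ i, r * (r - A) ≤ ⟪x - p i, x⟫ := by
    intro i
    have h1 : ⟪x - p i, x⟫ = r ^ 2 - ⟪p i, x⟫ := by
      rw [inner_sub_left, real_inner_self_eq_norm_sq]
    have h2 : ⟪p i, x⟫ ≤ ‖p i‖ * r := real_inner_le_norm (p i) x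
    have h3 : ‖p i‖ * r ≤ A * r := mul_le_mul_of_nonneg_right (hpA i) hx0.le
    nlinarith
  set S1 : ℝ := ∑ i : Fin k, (‖x - p i‖)⁻¹ with hS1def
  set S2 : ℝ := ∑ i : Fin k, (‖x - p i‖ ^ 2)⁻¹ with hS2def
  set S3 : ℝ := ∑ i : Fin k, (‖x - p i‖ ^ 3)⁻¹ with hS3def
  have hS1pos : 0 < S1 := Finset.sum_pos (fun i _ => inv_pos.mpr (hd i)) hne
  have hS3pos : 0 < S3 := Finset.sum_pos (fun i _ => inv_pos.mpr (pow_pos (hd i) 3)) hne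
  have hCS : S2 ^ 2 ≤ S1 * S3 := by
    refine Finset.sum_sq_le_sum_mul_sum_of_sq_eq_mul _ (fun i _ => ?_) (fun i _ => ?_)
      (fun i _ => ?_)
    · positivity
    · positivity
    · have h0 := (hd i).ne'
      field_simp
  have hGnorm : ‖G‖ ≤ S2 / 2 := by
    rw [hG, norm_neg]
    calc ‖∑ i : Fin k, (2 * ‖x - p i‖ ^ 3)⁻¹ • (x - p i)‖
        ≤ ∑ i : Fin k, ‖(2 * ‖x - p i‖ ^ 3)⁻¹ • (x - p i)‖ := norm_sum_le _ _
      _ = ∑ i : Fin k, (‖x - p i‖ ^ 2)⁻¹ / 2 := by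
          refine Finset.sum_congr rfl fun i _ => ?_
          rw [norm_smul, Real.norm_eq_abs,
            abs_of_pos (inv_pos.mpr (mul_pos two_pos (pow_pos (hd i) 3)))]
          have h0 := (hd i).ne'
          field_simp
      _ = S2 / 2 := by rw [hS2def, Finset.sum_div]
  have hGin : ⟪G, x⟫ ≤ -(r * (r - A) * S3 / 2) := by
    have hGi : ⟪G, x⟫ = -∑ i : Fin k, (2 * ‖x - p i‖ ^ 3)⁻¹ * ⟪x - p i, x⟫ := by
      rw [hG, inner_neg_left, sum_inner]
      congr 1
      exact Finset.sum_congr rfl fun i _ => real_inner_smul_left _ _ _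
    rw [hGi, neg_le_neg_iff]
    calc r * (r - A) * S3 / 2 = ∑ i : Fin k, r * (r - A) * (2 * ‖x - p i‖ ^ 3)⁻¹ := by
          rw [hS3def, Finset.mul_sum, Finset.sum_div]
          refine Finset.sum_congr rfl fun i _ => ?_
          rw [mul_inv]; ring
      _ ≤ ∑ i : Fin k, (2 * ‖x - p i‖ ^ 3)⁻¹ * ⟪x - p i, x⟫ := by
          refine Finset.sum_le_sum fun i _ => ?_
          have hpos : (0:ℝ) < (2 * ‖x - p i‖ ^ 3)⁻¹ :=
            inv_pos.mpr (mul_pos two_pos (pow_pos (hd i) 3))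
          rw [mul_comm (r * (r - A))]
          exact mul_le_mul_of_nonneg_left (hip i) hpos.le
  have hφ' : S1 / 2 ≤ φ := by
    rw [hφ, hS1def, Finset.sum_div]
    have he : ∑ i : Fin k, ‖x - p i‖⁻¹ / 2 = ∑ i : Fin k, (2 * ‖x - p i‖)⁻¹ := by
      refine Finset.sum_congr rfl fun i _ => ?_
      rw [mul_inv]; ring
    rw [he]; linarith
  have hG2 : ‖G‖ ^ 2 ≤ S1 * S3 / 4 := by
    have h1 : ‖G‖ ^ 2 ≤ (S2 / 2) ^ 2 := by
      have := norm_nonneg G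
      nlinarith
    nlinarith
  have hGin0 : ⟪G, x⟫ ≤ 0 := by
    refine hGin.trans ?_
    have hrA' : (0:ℝ) < r - A := by linarith
    have : (0:ℝ) < r * (r - A) * S3 / 2 := by
      have := mul_pos (mul_pos hx0 hrA') hS3pos
      linarith
    linarith
  have hnum : ‖G‖ ^ 2 * r ^ 2 + 2 * φ * ⟪G, x⟫ < 0 := by
    have h1 : φ * ⟪G, x⟫ ≤ (S1 / 2) * ⟪G, x⟫ :=
      mul_le_mul_of_nonpos_right hφ' hGin0
    have h2 : (S1 / 2) * ⟪G, x⟫ ≤ (S1 / 2) * -(r * (r - A) * S3 / 2) :=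
      mul_le_mul_of_nonneg_left hGin (by linarith)
    have h3 : ‖G‖ ^ 2 * r ^ 2 ≤ (S1 * S3 / 4) * r ^ 2 :=
      mul_le_mul_of_nonneg_right hG2 (sq_nonneg r)
    have hkey : (S1 * S3 / 4) * r ^ 2 + 2 * ((S1 / 2) * -(r * (r - A) * S3 / 2)) < 0 := by
      have he : (S1 * S3 / 4) * r ^ 2 + 2 * ((S1 / 2) * -(r * (r - A) * S3 / 2))
          = S1 * S3 * r * (2 * A - r) / 4 := by ring
      rw [he]
      have hneg : (0:ℝ) < r - 2 * A := by linarith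
      nlinarith [mul_pos (mul_pos (mul_pos hS1pos hS3pos) hx0) hneg]
    linarith
  have heq : ‖G‖ ^ 2 + 2 * φ * ⟪G, x⟫ / r ^ 2
      = (‖G‖ ^ 2 * r ^ 2 + 2 * φ * ⟪G, x⟫) / r ^ 2 := by
    field_simp
  rw [heq]
  exact div_neg_of_neg_of_pos hnum (pow_pos hx0 2)
end

section
/- Let k ≥ 1, let p₁,…,p_k ∈ ℝ³ with p₁ = 0, and let m ≥ 0. Define φ(x) = m + ∑_{i=1}^k 1/(2‖x − p_i‖) and G(x) = −∑_{i=1}^k (x − p_i)/(2‖x − p_i‖³). Then there exists r₀ > 0 such that for every x ∈ ℝ³ with 0 < ‖x‖ < r₀ and x ≠ p_i for all i, one has ‖G(x)‖² + 2φ(x)·⟪G(x), x⟫/‖x‖² < 0. -/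
open RealInnerProductSpace

private lemma stmt_6_algebra (ms N t I ρ : ℝ) (ht : t ≠ 0) :
    ((N * (2 * t ^ 3)⁻¹) ^ 2 * t ^ 2 + 2 * (N * (2 * t ^ 3)⁻¹) * I + ρ ^ 2)
      + 2 * (ms + N * (2 * t)⁻¹) * (-((N * (2 * t ^ 3)⁻¹) * t ^ 2 + I)) / t ^ 2
    = -(N ^ 2 / (4 * t ^ 4)) + ρ ^ 2 - 2 * ms * (N * (2 * t)⁻¹ + I) / t ^ 2 := by
  field_simp
  ring

set_option maxHeartbeats 800000 in
/-- **Determinant negativity for small spheres when a point is at the origin.**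
For the Gibbons--Hawking potential `φ(x) = m + ∑ i, 1/(2‖x − p i‖)` with `p 0 = 0` and
gradient `G(x) = −∑ i, (x − p i)/(2‖x − p i‖³)`, there is `r₀ > 0` such that
`‖G(x)‖² + 2φ(x)⟪G(x), x⟫/‖x‖² < 0` whenever `0 < ‖x‖ < r₀` and `x ≠ p i` for all `i`. -/
theorem stmt_6 (k : ℕ) (hk : 1 ≤ k) (p : Fin k → EuclideanSpace ℝ (Fin 3))
    (hp : p ⟨0, hk⟩ = 0) (m : ℝ) (hm : 0 ≤ m)
    (φ : EuclideanSpace ℝ (Fin 3) → ℝ)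
    (hφ : ∀ x, φ x = m + ∑ i : Fin k, (2 * ‖x - p i‖)⁻¹)
    (G : EuclideanSpace ℝ (Fin 3) → EuclideanSpace ℝ (Fin 3))
    (hG : ∀ x, G x = -∑ i : Fin k, (2 * ‖x - p i‖ ^ 3)⁻¹ • (x - p i)) :
    ∃ r₀ > 0, ∀ x : EuclideanSpace ℝ (Fin 3), 0 < ‖x‖ → ‖x‖ < r₀ →
      (∀ i, x ≠ p i) →
      ‖G x‖ ^ 2 + 2 * φ x * ⟪G x, x⟫ / ‖x‖ ^ 2 < 0 := by
  classical
  set Z : Finset (Fin k) := Finset.univ.filter (fun i => p i = 0) with hZ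
  set Zc : Finset (Fin k) := Finset.univ.filter (fun i => ¬ p i = 0) with hZc
  set n : ℕ := Z.card with hncard
  have hn : 1 ≤ n := Finset.card_pos.mpr ⟨⟨0, hk⟩, by simp [hZ, hp]⟩
  obtain ⟨d, hd0, hdle⟩ : ∃ d > 0, ∀ i ∈ Zc, d ≤ ‖p i‖ := by
    by_cases h : Zc.Nonempty
    · refine ⟨Zc.inf' h (fun i => ‖p i‖), ?_, ?_⟩
      · apply (Finset.lt_inf'_iff h).mpr
        intro i hi
        have : p i ≠ 0 := by simpa [hZc] using hi
        simpa [norm_pos_iff] using this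
      · intro i hi; exact Finset.inf'_le _ hi
    · exact ⟨1, one_pos, fun i hi => absurd ⟨i, hi⟩ h⟩
  set Cr : ℝ := 2 * k / d ^ 2 with hCrdef
  set Cm : ℝ := m + k / d with hCmdef
  have hCr : 0 ≤ Cr := by positivity
  have hCm : 0 ≤ Cm := by positivity
  set B : ℝ := 4 * Cr ^ 2 + 8 * Cm * Cr + 1 with hBdef
  have hB1 : 1 ≤ B := by nlinarith [sq_nonneg Cr, mul_nonneg hCm hCr]
  refine ⟨min (d / 2) B⁻¹, by positivity, ?_⟩
  intro x ht0 hxr hxi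
  set t : ℝ := ‖x‖ with htdef
  have htne : t ≠ 0 := ne_of_gt ht0
  have htd : t < d / 2 := lt_of_lt_of_le hxr (min_le_left _ _)
  have htB : t < B⁻¹ := lt_of_lt_of_le hxr (min_le_right _ _)
  have hdist : ∀ i ∈ Zc, d / 2 ≤ ‖x - p i‖ := by
    intro i hi
    have h1 : d ≤ ‖p i‖ := hdle i hi
    have h2 : ‖p i‖ - ‖x‖ ≤ ‖x - p i‖ := by
      have h3 := abs_norm_sub_norm_le (p i) x
      rw [norm_sub_rev] at h3
      linarith [le_abs_self (‖p i‖ - ‖x‖)]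
    linarith
  have hxnorm : ∀ i, (0:ℝ) < ‖x - p i‖ :=
    fun i => norm_pos_iff.mpr (sub_ne_zero.mpr (hxi i))
  set s : ℝ := ∑ i ∈ Zc, (2 * ‖x - p i‖)⁻¹ with hsdef
  set r : EuclideanSpace ℝ (Fin 3) := ∑ i ∈ Zc, (2 * ‖x - p i‖ ^ 3)⁻¹ • (x - p i) with hrdef
  have hs0 : 0 ≤ s := Finset.sum_nonneg fun i _ => by positivity
  have hsle : s ≤ k / d := by
    calc s ≤ ∑ i ∈ Zc, (1 / d) := by
            apply Finset.sum_le_sum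
            intro i hi
            rw [one_div]
            apply inv_anti₀ hd0
            have := hdist i hi; linarith
      _ = Zc.card * (1 / d) := by rw [Finset.sum_const, nsmul_eq_mul]
      _ ≤ k * (1 / d) := by
            apply mul_le_mul_of_nonneg_right _ (by positivity)
            exact_mod_cast (Finset.card_le_univ Zc).trans_eq (by simp)
      _ = k / d := by ring
  have hrle : ‖r‖ ≤ Cr := by
    calc ‖r‖ ≤ ∑ i ∈ Zc, ‖(2 * ‖x - p i‖ ^ 3)⁻¹ • (x - p i)‖ := norm_sum_le _ _
      _ ≤ ∑ i ∈ Zc, (2 / d ^ 2) := by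
            apply Finset.sum_le_sum
            intro i hi
            have h1 := hdist i hi
            have h2 := hxnorm i
            rw [norm_smul, Real.norm_eq_abs, abs_inv, abs_of_pos (by positivity),
              inv_mul_eq_div, div_le_div_iff₀ (by positivity) (by positivity)]
            nlinarith [sq_nonneg (‖x - p i‖ - d/2), sq_nonneg ‖x - p i‖]
      _ = Zc.card * (2 / d ^ 2) := by rw [Finset.sum_const, nsmul_eq_mul]
      _ ≤ k * (2 / d ^ 2) := by
            apply mul_le_mul_of_nonneg_right _ (by positivity)
            exact_mod_cast (Finset.card_le_univ Zc).trans_eq (by simp)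
      _ = Cr := by rw [hCrdef]; ring
  -- split the sums
  have hZs1 : ∀ i ∈ Z, (2 * ‖x - p i‖)⁻¹ = (2 * t)⁻¹ := by
    intro i hi
    rw [hZ, Finset.mem_filter] at hi
    rw [hi.2, sub_zero]
  have hZs2 : ∀ i ∈ Z, (2 * ‖x - p i‖ ^ 3)⁻¹ • (x - p i) = (2 * t ^ 3)⁻¹ • x := by
    intro i hi
    rw [hZ, Finset.mem_filter] at hi
    rw [hi.2, sub_zero]
  have hsplitφ : φ x = (m + s) + (n : ℝ) * (2 * t)⁻¹ := by
    rw [hφ x, ← Finset.sum_filter_add_sum_filter_not Finset.univ (fun i => p i = 0)]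
    rw [Finset.sum_congr rfl hZs1, Finset.sum_const, nsmul_eq_mul, ← hsdef]
    ring
  have hsplitG : G x = -(((n : ℝ) * (2 * t ^ 3)⁻¹) • x + r) := by
    rw [hG x, ← Finset.sum_filter_add_sum_filter_not Finset.univ (fun i => p i = 0)]
    rw [Finset.sum_congr rfl hZs2, Finset.sum_const, ← hrdef,
      ← Nat.cast_smul_eq_nsmul ℝ, smul_smul]
  have hip : ⟪G x, x⟫ = -(((n : ℝ) * (2 * t ^ 3)⁻¹) * t ^ 2 + ⟪r, x⟫) := by
    rw [hsplitG, inner_neg_left, inner_add_left, real_inner_smul_left,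
      real_inner_self_eq_norm_sq]
  have hnG : ‖G x‖ ^ 2 = ((n : ℝ) * (2 * t ^ 3)⁻¹) ^ 2 * t ^ 2
      + 2 * ((n : ℝ) * (2 * t ^ 3)⁻¹) * ⟪r, x⟫ + ‖r‖ ^ 2 := by
    rw [hsplitG, norm_neg, norm_add_sq_real, norm_smul, real_inner_smul_left,
      real_inner_comm x r, mul_pow, Real.norm_eq_abs,
      abs_of_nonneg (by positivity : (0:ℝ) ≤ (n : ℝ) * (2 * t ^ 3)⁻¹)]
    ring
  have hE : ‖G x‖ ^ 2 + 2 * φ x * ⟪G x, x⟫ / ‖x‖ ^ 2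
      = -((n:ℝ) ^ 2 / (4 * t ^ 4)) + ‖r‖ ^ 2
        - 2 * (m + s) * ((n:ℝ) * (2 * t)⁻¹ + ⟪r, x⟫) / t ^ 2 := by
    rw [hnG, hip, hsplitφ]
    exact stmt_6_algebra (m + s) (n : ℝ) t ⟪r, x⟫ ‖r‖ htne
  rw [hE]
  clear hφ hG hsplitφ hsplitG hip hnG hE hZs1 hZs2 hdist hxnorm hxi
  clear_value Z Zc n t s r Cr Cm B
  -- bounds
  have hipb : -(Cr * t) ≤ ⟪r, x⟫ := by
    have h1 : |⟪r, x⟫| ≤ ‖r‖ * t := by rw [htdef]; exact abs_real_inner_le_norm r x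
    have h2 : ‖r‖ * t ≤ Cr * t := mul_le_mul_of_nonneg_right hrle ht0.le
    have h3 := neg_abs_le ⟪r, x⟫
    linarith
  have hms : 0 ≤ m + s := by linarith
  have hmsle : m + s ≤ Cm := by rw [hCmdef]; linarith
  have hn1 : (1:ℝ) ≤ (n:ℝ) := by exact_mod_cast hn
  set u : ℝ := t⁻¹ with hudef
  clear_value u
  have hu0 : 0 < u := by rw [hudef]; positivity
  have hut : t * u = 1 := by rw [hudef]; exact mul_inv_cancel₀ htne
  have hB0 : (0:ℝ) < B := by linarith
  have huB : B ≤ u := by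
    rw [hudef]
    have h1 : (B⁻¹)⁻¹ ≤ t⁻¹ := inv_anti₀ ht0 htB.le
    rwa [inv_inv] at h1
  have hu1 : 1 ≤ u := le_trans hB1 huB
  have hterm1 : -((n:ℝ) ^ 2 / (4 * t ^ 4)) ≤ -(u ^ 4 / 4) := by
    have h1 : u ^ 4 / 4 ≤ (n:ℝ) ^ 2 / (4 * t ^ 4) := by
      rw [div_le_div_iff₀ (by norm_num) (by positivity)]
      have h2 : u ^ 4 * t ^ 4 = 1 := by
        rw [← mul_pow, mul_comm, hut]; norm_num
      nlinarith [sq_nonneg ((n:ℝ) - 1)]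
    linarith
  have hterm3 : -(2 * (m + s) * ((n:ℝ) * (2 * t)⁻¹ + ⟪r, x⟫) / t ^ 2)
      ≤ 2 * Cm * Cr * u := by
    have hnn : 0 ≤ (n:ℝ) * (2 * t)⁻¹ := by positivity
    have h1 : -(Cm * (Cr * t)) ≤ (m + s) * ((n:ℝ) * (2 * t)⁻¹ + ⟪r, x⟫) := by
      have h2 : -(Cm * (Cr * t)) ≤ (m + s) * ⟪r, x⟫ := by
        rcases le_or_gt 0 ⟪r, x⟫ with h | h
        · nlinarith [mul_nonneg hms h, mul_nonneg hCm (mul_nonneg hCr ht0.le)]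
        · nlinarith [mul_nonneg (sub_nonneg.mpr hmsle) (neg_nonneg.mpr h.le),
            mul_le_mul_of_nonneg_left hipb hCm]
      nlinarith [mul_nonneg hms hnn, mul_nonneg hCm (mul_nonneg hCr ht0.le)]
    have h0 : -(2 * (m + s) * ((n:ℝ) * (2 * t)⁻¹ + ⟪r, x⟫) / t ^ 2)
        = (-(2 * (m + s) * ((n:ℝ) * (2 * t)⁻¹ + ⟪r, x⟫))) / t ^ 2 := by ring
    rw [h0, div_le_iff₀ (by positivity : (0:ℝ) < t ^ 2)]
    have h4 : u * t ^ 2 = t := by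
      rw [hudef]; field_simp
    nlinarith [mul_nonneg (mul_nonneg (by norm_num : (0:ℝ) ≤ 2) hCm) hCr]
  have hrsq : ‖r‖ ^ 2 ≤ Cr ^ 2 := by nlinarith [norm_nonneg r]
  have hfinal : -(u ^ 4 / 4) + Cr ^ 2 + 2 * Cm * Cr * u < 0 := by
    have hu3 : B ^ 3 ≤ u ^ 3 := pow_le_pow_left₀ (by linarith) huB 3
    have hu4 : B ^ 3 * u ≤ u ^ 4 := by
      calc B ^ 3 * u ≤ u ^ 3 * u := mul_le_mul_of_nonneg_right hu3 hu0.le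
        _ = u ^ 4 := by ring
    have hB2 : B ≤ B ^ 2 := by linarith [mul_le_mul_of_nonneg_right hB1 hB0.le]
    have hB3 : B ^ 2 ≤ B ^ 3 := by linarith [mul_le_mul_of_nonneg_right hB2 hB0.le]
    have hB13 : B ≤ B ^ 3 := le_trans hB2 hB3
    have h5 : B * u ≤ u ^ 4 :=
      le_trans (mul_le_mul_of_nonneg_right hB13 hu0.le) hu4
    have h6 : 4 * Cr ^ 2 + 8 * Cm * Cr * u + u ≤ B * u := by
      rw [hBdef]
      linarith [mul_nonneg (sub_nonneg.mpr hu1) (sq_nonneg Cr)]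
    linarith
  linarith
end

section
/- Let k ≥ 2 be an integer, let a > 0, m ≥ 0, and let p₁,…,p_{k−2} ∈ ℝ³ be points (possibly none when k = 2). Define φ̃ : ℝ → ℝ by φ̃(t) = m + ∑_{l=1}^{k−2} 1/(2‖p_l − (0,0,t)‖). Suppose there is a real number s > 0 with 2s² ≥ k − 2, 4s³ ≥ 16s² + 2s + (k − 2), and ‖p_l‖ > (s + 1)a for every l. Then for every t ∈ [−a, a] (where φ̃ is smooth, since ‖p_l‖ > a), writing φ̃′ and φ̃″ for the first and second derivatives of φ̃, one has 2(φ̃′(t))²(a² − t²)³ + 8at·φ̃′(t)(a² − t²) − a·φ̃″(t)(a² − t²)² − φ̃(t)·φ̃″(t)(a² − t²)³ − 2a² − 2a·φ̃(t)(a² − t²) − 8a·φ̃(t)·t² < 0. -/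
open Real Finset

noncomputable def gfun (r2 z : ℝ) : ℝ → ℝ := fun τ => (2 * Real.sqrt (r2 + (τ - z)^2))⁻¹
noncomputable def gfun' (r2 z : ℝ) : ℝ → ℝ :=
  fun τ => -((τ - z) / (2 * Real.sqrt (r2 + (τ - z)^2) ^ 3))
noncomputable def gfun'' (r2 z : ℝ) : ℝ → ℝ :=
  fun τ => (3*(τ - z)^2 - (r2 + (τ - z)^2)) / (2 * Real.sqrt (r2 + (τ - z)^2) ^ 5)

lemma hasDerivAt_gfun (r2 z τ : ℝ) (h : 0 < r2 + (τ - z)^2) :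
    HasDerivAt (gfun r2 z) (gfun' r2 z τ) τ := by
  have he : 0 < Real.sqrt (r2 + (τ - z)^2) := Real.sqrt_pos.2 h
  have hq : HasDerivAt (fun τ : ℝ => r2 + (τ - z)^2) (2*(τ - z)) τ := by
    simpa using (((hasDerivAt_id τ).sub_const z).pow 2).const_add r2
  have hs : HasDerivAt (fun τ : ℝ => Real.sqrt (r2 + (τ - z)^2))
      (2*(τ - z) / (2 * Real.sqrt (r2 + (τ - z)^2))) τ := hq.sqrt h.ne'
  have h2 := (hs.const_mul 2).inv (by positivity)
  refine h2.congr_deriv ?_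
  unfold gfun'
  field_simp

lemma hasDerivAt_gfun' (r2 z τ : ℝ) (h : 0 < r2 + (τ - z)^2) :
    HasDerivAt (gfun' r2 z) (gfun'' r2 z τ) τ := by
  have he : 0 < Real.sqrt (r2 + (τ - z)^2) := Real.sqrt_pos.2 h
  have hq : HasDerivAt (fun τ : ℝ => r2 + (τ - z)^2) (2*(τ - z)) τ := by
    simpa using (((hasDerivAt_id τ).sub_const z).pow 2).const_add r2
  have hs : HasDerivAt (fun τ : ℝ => Real.sqrt (r2 + (τ - z)^2))
      (2*(τ - z) / (2 * Real.sqrt (r2 + (τ - z)^2))) τ := hq.sqrt h.ne'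
  have hd : HasDerivAt (fun τ : ℝ => 2 * Real.sqrt (r2 + (τ - z)^2) ^ 3)
      (2 * (3 * Real.sqrt (r2 + (τ - z)^2) ^ 2 *
        (2*(τ - z) / (2 * Real.sqrt (r2 + (τ - z)^2))))) τ := by
    simpa [mul_comm, mul_assoc, mul_left_comm] using (hs.pow 3).const_mul 2
  have hn : HasDerivAt (fun τ : ℝ => τ - z) 1 τ := (hasDerivAt_id τ).sub_const z
  have h2 := (hn.div hd (by positivity)).neg
  refine h2.congr_deriv ?_
  unfold gfun''
  set e := Real.sqrt (r2 + (τ - z)^2) with hedef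
  have hsq : r2 + (τ - z)^2 = e ^ 2 := (Real.sq_sqrt h.le).symm
  rw [hsq]
  field_simp
  ring

noncomputable def qf (v : EuclideanSpace ℝ (Fin 3)) (τ : ℝ) : ℝ :=
  ((v 0)^2 + (v 1)^2) + (τ - v 2)^2

noncomputable def ef (v : EuclideanSpace ℝ (Fin 3)) (τ : ℝ) : ℝ := Real.sqrt (qf v τ)

lemma norm_sub_virt (v : EuclideanSpace ℝ (Fin 3)) (τ : ℝ) :
    ‖v - (EuclideanSpace.equiv (Fin 3) ℝ).symm ![0, 0, τ]‖ = ef v τ := by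
  rw [EuclideanSpace.norm_eq]
  unfold ef qf
  congr 1
  simp [Fin.sum_univ_three, Real.norm_eq_abs, sq_abs]
  ring

lemma norm_self_virt (v : EuclideanSpace ℝ (Fin 3)) :
    ‖v‖ ^ 2 = ((v 0)^2 + (v 1)^2) + (v 2)^2 := by
  rw [EuclideanSpace.norm_eq, Real.sq_sqrt (by positivity)]
  simp [Fin.sum_univ_three, Real.norm_eq_abs, sq_abs]

lemma gfun_eq (v : EuclideanSpace ℝ (Fin 3)) (τ : ℝ) :
    gfun ((v 0)^2 + (v 1)^2) (v 2) τ = (2 * ef v τ)⁻¹ := rfl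

lemma gfun'_eq (v : EuclideanSpace ℝ (Fin 3)) (τ : ℝ) :
    gfun' ((v 0)^2 + (v 1)^2) (v 2) τ = -((τ - v 2) / (2 * ef v τ ^ 3)) := rfl

lemma gfun''_eq (v : EuclideanSpace ℝ (Fin 3)) (τ : ℝ) :
    gfun'' ((v 0)^2 + (v 1)^2) (v 2) τ = (3*(τ - v 2)^2 - qf v τ) / (2 * ef v τ ^ 5) := rfl

set_option maxHeartbeats 4000000

/-- **Strong stability criterion (Gaussian curvature positivity along the segment).**
Let `φ̃(t) = m + ∑ l, 1/(2‖p l − (0,0,t)‖)` be the contribution of the other singular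
points along the segment joining `(0,0,a)` and `(0,0,−a)`. If there is `s > 0` with
`2s² ≥ k − 2`, `4s³ ≥ 16s² + 2s + (k − 2)` and `‖p l‖ > (s + 1)a` for all `l`, then for
every `t ∈ [−a, a]` the quantity `M + N` is negative:
`2(φ̃′)²(a²−t²)³ + 8at φ̃′ (a²−t²) − a φ̃″ (a²−t²)² − φ̃ φ̃″ (a²−t²)³ − 2a² − 2a φ̃ (a²−t²) − 8a φ̃ t² < 0`. -/
theorem stmt_9 (k : ℕ) (hk : 2 ≤ k) (a m : ℝ) (ha : 0 < a) (hm : 0 ≤ m)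
    (p : Fin (k - 2) → EuclideanSpace ℝ (Fin 3))
    (φ : ℝ → ℝ)
    (hφ : ∀ t, φ t = m + ∑ l : Fin (k - 2),
      (2 * ‖p l - (EuclideanSpace.equiv (Fin 3) ℝ).symm ![0, 0, t]‖)⁻¹)
    (s : ℝ) (hs : 0 < s) (hs1 : 2 * s ^ 2 ≥ (k : ℝ) - 2)
    (hs2 : 4 * s ^ 3 ≥ 16 * s ^ 2 + 2 * s + ((k : ℝ) - 2))
    (hp : ∀ l, ‖p l‖ > (s + 1) * a) :
    ∀ t ∈ Set.Icc (-a) a,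
      2 * (deriv φ t) ^ 2 * (a ^ 2 - t ^ 2) ^ 3
        + 8 * a * t * deriv φ t * (a ^ 2 - t ^ 2)
        - a * deriv (deriv φ) t * (a ^ 2 - t ^ 2) ^ 2
        - φ t * deriv (deriv φ) t * (a ^ 2 - t ^ 2) ^ 3
        - 2 * a ^ 2 - 2 * a * φ t * (a ^ 2 - t ^ 2)
        - 8 * a * φ t * t ^ 2 < 0 := by
  have hk2 : (2:ℝ) ≤ (k:ℝ) := by exact_mod_cast hk
  have hK0 : (0:ℝ) ≤ (k:ℝ) - 2 := by linarith
  have hs4 : 4 ≤ s := by nlinarith [mul_pos hs hs]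
  have hK4 : (k:ℝ) - 2 ≤ 4*s^3 := by nlinarith
  intro t ht
  obtain ⟨ht1, ht2⟩ := ht
  have ht2' : t^2 ≤ a^2 := by nlinarith
  have hc0 : 0 ≤ a^2 - t^2 := by linarith
  obtain ⟨ψ, B, W, S, hφt, hd1, hd2, hψ0, hW0, hS0, hCS, hB1, hB1', hψK, hSK⟩ :
      ∃ ψ B W S : ℝ, φ t = m + ψ ∧ deriv φ t = -B ∧ deriv (deriv φ) t = 3*W - S ∧
        0 ≤ ψ ∧ 0 ≤ W ∧ 0 ≤ S ∧ B^2 ≤ ψ*W ∧ s*a*B ≤ ψ ∧ -ψ ≤ s*a*B ∧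
        2*(s*a)*ψ ≤ (k:ℝ) - 2 ∧ 2*(s*a)^3*S ≤ (k:ℝ) - 2 := by
    have hsa : 0 < s*a := mul_pos hs ha
    have habs_t : |t| < 2*a := by rw [abs_lt]; constructor <;> linarith
    have hqpos : ∀ (l : Fin (k-2)) (τ : ℝ), |τ| < 2*a → 0 < qf (p l) τ := by
      intro l τ hτ
      have hR := hp l
      have hRl := norm_self_virt (p l)
      have h5 : 5*a < ‖p l‖ := by
        nlinarith [mul_nonneg (by linarith : (0:ℝ) ≤ s - 4) ha.le]
      have h25 : 25*a^2 < ‖p l‖^2 := by nlinarith [ha]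
      have hτ2 : τ^2 < 4*a^2 := by nlinarith [sq_abs τ, abs_nonneg τ]
      unfold qf
      nlinarith [sq_nonneg (p l 2 - 2*τ), sq_nonneg (p l 0), sq_nonneg (p l 1)]
    have hqt : ∀ l : Fin (k-2), 0 < qf (p l) t := fun l => hqpos l t habs_t
    have hept : ∀ l : Fin (k-2), 0 < ef (p l) t := fun l => Real.sqrt_pos.2 (hqt l)
    have hesq : ∀ l : Fin (k-2), ef (p l) t ^ 2 = qf (p l) t :=
      fun l => Real.sq_sqrt (hqt l).le
    have hesa : ∀ l : Fin (k-2), s*a ≤ ef (p l) t := by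
      intro l
      have hTa : |t| ≤ a := abs_le.mpr ⟨ht1, ht2⟩
      have hRl := norm_self_virt (p l)
      have hzR : |p l 2| ≤ ‖p l‖ := by
        nlinarith [sq_abs (p l 2), abs_nonneg (p l 2), norm_nonneg (p l),
          sq_nonneg (p l 0), sq_nonneg (p l 1)]
      have htz : t * p l 2 ≤ |t| * ‖p l‖ := by
        calc t * p l 2 ≤ |t * p l 2| := le_abs_self _
          _ = |t| * |p l 2| := abs_mul _ _
          _ ≤ |t| * ‖p l‖ := mul_le_mul_of_nonneg_left hzR (abs_nonneg t)
      have hP : 0 ≤ ‖p l‖ - |t| - s*a := by nlinarith [hp l]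
      rw [show s*a = Real.sqrt ((s*a)^2) from (Real.sqrt_sq (by positivity)).symm]
      apply Real.sqrt_le_sqrt
      unfold qf
      nlinarith [htz, sq_abs t,
        mul_nonneg hP (by nlinarith [hp l, norm_nonneg (p l)] : (0:ℝ) ≤ ‖p l‖ - |t| + s*a)]
    have hue : ∀ l : Fin (k-2), (t - p l 2)^2 ≤ ef (p l) t ^ 2 := by
      intro l; rw [hesq l]; unfold qf
      nlinarith [sq_nonneg (p l 0), sq_nonneg (p l 1)]
    have hφfun : φ = fun τ => m + ∑ l : Fin (k-2),
        gfun ((p l 0)^2 + (p l 1)^2) (p l 2) τ := by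
      funext τ
      rw [hφ]
      congr 1
      exact Finset.sum_congr rfl fun l _ => by rw [norm_sub_virt]; rfl
    have hU : ∀ τ ∈ Set.Ioo (-(2*a)) (2*a),
        HasDerivAt φ (∑ l : Fin (k-2), gfun' ((p l 0)^2 + (p l 1)^2) (p l 2) τ) τ := by
      intro τ hτ
      have habs : |τ| < 2*a := abs_lt.2 ⟨by linarith [hτ.1], hτ.2⟩
      rw [hφfun]
      exact (HasDerivAt.fun_sum fun l _ =>
        hasDerivAt_gfun _ _ _ (hqpos l τ habs)).const_add m
    have htU : t ∈ Set.Ioo (-(2*a)) (2*a) := ⟨by linarith, by linarith⟩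
    have hd1 : deriv φ t = ∑ l : Fin (k-2), gfun' ((p l 0)^2 + (p l 1)^2) (p l 2) t :=
      (hU t htU).deriv
    have hd2 : deriv (deriv φ) t
        = ∑ l : Fin (k-2), gfun'' ((p l 0)^2 + (p l 1)^2) (p l 2) t := by
      have heq : deriv φ =ᶠ[nhds t] fun τ => ∑ l : Fin (k-2),
          gfun' ((p l 0)^2 + (p l 1)^2) (p l 2) τ := by
        filter_upwards [isOpen_Ioo.mem_nhds htU] with τ hτ using (hU τ hτ).deriv
      rw [heq.deriv_eq]
      exact (HasDerivAt.fun_sum fun l _ =>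
        hasDerivAt_gfun' _ _ _ (hqpos l t habs_t)).deriv
    refine ⟨∑ l : Fin (k-2), (2 * ef (p l) t)⁻¹,
      ∑ l : Fin (k-2), (t - p l 2) / (2 * ef (p l) t ^ 3),
      ∑ l : Fin (k-2), (t - p l 2)^2 / (2 * ef (p l) t ^ 5),
      ∑ l : Fin (k-2), (2 * ef (p l) t ^ 3)⁻¹,
      ?_, ?_, ?_, ?_, ?_, ?_, ?_, ?_, ?_, ?_, ?_⟩
    · rw [hφ]
      congr 1
      exact Finset.sum_congr rfl fun l _ => by rw [norm_sub_virt]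
    · rw [hd1, ← Finset.sum_neg_distrib]
      exact Finset.sum_congr rfl fun l _ => gfun'_eq (p l) t
    · rw [hd2, Finset.mul_sum, ← Finset.sum_sub_distrib]
      refine Finset.sum_congr rfl fun l _ => ?_
      rw [gfun''_eq, ← hesq l]
      have he := hept l
      field_simp
    · exact Finset.sum_nonneg fun l _ => inv_nonneg.2 (by nlinarith [hept l])
    · exact Finset.sum_nonneg fun l _ =>
        div_nonneg (sq_nonneg _) (by nlinarith [pow_pos (hept l) 5])
    · exact Finset.sum_nonneg fun l _ => inv_nonneg.2 (by nlinarith [pow_pos (hept l) 3])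
    · -- Cauchy-Schwarz
      have key := Finset.sum_mul_sq_le_sq_mul_sq Finset.univ
        (fun l : Fin (k-2) => Real.sqrt ((2 * ef (p l) t)⁻¹))
        (fun l : Fin (k-2) => Real.sqrt ((2 * ef (p l) t)⁻¹) *
          ((t - p l 2) * (ef (p l) t ^ 2)⁻¹))
      have e1 : (∑ l : Fin (k-2), Real.sqrt ((2 * ef (p l) t)⁻¹) *
          (Real.sqrt ((2 * ef (p l) t)⁻¹) * ((t - p l 2) * (ef (p l) t ^ 2)⁻¹)))
          = ∑ l : Fin (k-2), (t - p l 2) / (2 * ef (p l) t ^ 3) := by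
        refine Finset.sum_congr rfl fun l _ => ?_
        have he := hept l
        rw [← mul_assoc, Real.mul_self_sqrt (inv_nonneg.2 (by nlinarith [hept l]))]
        field_simp
      have e2 : (∑ l : Fin (k-2), Real.sqrt ((2 * ef (p l) t)⁻¹) ^ 2)
          = ∑ l : Fin (k-2), (2 * ef (p l) t)⁻¹ :=
        Finset.sum_congr rfl fun l _ => Real.sq_sqrt (inv_nonneg.2 (by nlinarith [hept l]))
      have e3 : (∑ l : Fin (k-2), (Real.sqrt ((2 * ef (p l) t)⁻¹) *
          ((t - p l 2) * (ef (p l) t ^ 2)⁻¹)) ^ 2)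
          = ∑ l : Fin (k-2), (t - p l 2)^2 / (2 * ef (p l) t ^ 5) := by
        refine Finset.sum_congr rfl fun l _ => ?_
        have he := hept l
        rw [mul_pow, Real.sq_sqrt (inv_nonneg.2 (by nlinarith [hept l]))]
        rw [mul_pow]
        have he5 := pow_pos (hept l) 5
        field_simp
      rw [e1, e2, e3] at key
      exact key
    · -- s*a*B ≤ ψ
      rw [Finset.mul_sum]
      refine Finset.sum_le_sum fun l _ => ?_
      have he := hept l
      have h1 : t - p l 2 ≤ ef (p l) t := by nlinarith [hue l, hept l]
      have hkey : s*a*(t - p l 2) ≤ ef (p l) t^2 := by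
        nlinarith [mul_le_mul_of_nonneg_left h1 hsa.le,
          mul_le_mul_of_nonneg_right (hesa l) (hept l).le]
      rw [show s*a*((t - p l 2)/(2*ef (p l) t^3))
          = (s*a*(t - p l 2))/(2*ef (p l) t^3) by ring, div_le_iff₀ (by positivity)]
      calc s*a*(t - p l 2) ≤ ef (p l) t^2 := hkey
        _ = (2*ef (p l) t)⁻¹*(2*ef (p l) t^3) := by field_simp
    · -- -ψ ≤ s*a*B
      rw [Finset.mul_sum, ← Finset.sum_neg_distrib]
      refine Finset.sum_le_sum fun l _ => ?_
      have he := hept l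
      have h1 : -(ef (p l) t) ≤ t - p l 2 := by nlinarith [hue l, hept l]
      have hkey : -(ef (p l) t^2) ≤ s*a*(t - p l 2) := by
        nlinarith [mul_le_mul_of_nonneg_left h1 hsa.le,
          mul_le_mul_of_nonneg_right (hesa l) (hept l).le]
      rw [show s*a*((t - p l 2)/(2*ef (p l) t^3))
          = (s*a*(t - p l 2))/(2*ef (p l) t^3) by ring, le_div_iff₀ (by positivity)]
      calc -(2 * ef (p l) t)⁻¹ * (2*ef (p l) t^3) = -(ef (p l) t^2) := by field_simp
        _ ≤ s*a*(t - p l 2) := hkey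
    · -- 2*(s*a)*ψ ≤ k-2
      calc 2*(s*a)*(∑ l : Fin (k-2), (2 * ef (p l) t)⁻¹)
          = ∑ l : Fin (k-2), 2*(s*a)*(2 * ef (p l) t)⁻¹ := Finset.mul_sum _ _ _
        _ ≤ ∑ l : Fin (k-2), 1 := by
            refine Finset.sum_le_sum fun l _ => ?_
            have he := hept l
            have hle : (2 * ef (p l) t)⁻¹ ≤ (2*(s*a))⁻¹ :=
              inv_anti₀ (by positivity) (by linarith [hesa l])
            calc 2*(s*a)*(2 * ef (p l) t)⁻¹ ≤ 2*(s*a)*(2*(s*a))⁻¹ :=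
                  mul_le_mul_of_nonneg_left hle (by positivity)
              _ = 1 := by field_simp
        _ = (k:ℝ) - 2 := by
            rw [Finset.sum_const, Finset.card_univ, Fintype.card_fin, nsmul_eq_mul,
              Nat.cast_sub hk]
            norm_num
    · -- 2*(s*a)^3*S ≤ k-2
      calc 2*(s*a)^3*(∑ l : Fin (k-2), (2 * ef (p l) t ^ 3)⁻¹)
          = ∑ l : Fin (k-2), 2*(s*a)^3*(2 * ef (p l) t ^ 3)⁻¹ := Finset.mul_sum _ _ _
        _ ≤ ∑ l : Fin (k-2), 1 := by
            refine Finset.sum_le_sum fun l _ => ?_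
            have he := hept l
            have hcube : (s*a)^3 ≤ ef (p l) t ^ 3 :=
              pow_le_pow_left₀ hsa.le (hesa l) 3
            have hle : (2 * ef (p l) t ^ 3)⁻¹ ≤ (2*(s*a)^3)⁻¹ :=
              inv_anti₀ (by positivity) (by linarith)
            calc 2*(s*a)^3*(2 * ef (p l) t ^ 3)⁻¹ ≤ 2*(s*a)^3*(2*(s*a)^3)⁻¹ :=
                  mul_le_mul_of_nonneg_left hle (by positivity)
              _ = 1 := by field_simp
        _ = (k:ℝ) - 2 := by
            rw [Finset.sum_const, Finset.card_univ, Fintype.card_fin, nsmul_eq_mul,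
              Nat.cast_sub hk]
            norm_num
  rw [hφt, hd1, hd2]
  have hsa : 0 < s*a := mul_pos hs ha
  have hss : 2*s^2 ≤ (2*s^3)*(1/4) := by
    nlinarith [mul_nonneg (by linarith : (0:ℝ) ≤ s - 4) (sq_nonneg s)]
  have haS : a^3*S ≤ 1/4 := by
    have h2 : (2*s^3)*(a^3*S) ≤ (2*s^3)*(1/4) := by nlinarith [hSK, hs1, hss]
    exact le_of_mul_le_mul_left h2 (by positivity)
  have hKK : ((k:ℝ)-2)*((k:ℝ)-2) ≤ 4*s^4 := by nlinarith
  have h1 : (2*(s*a))*ψ*((2*(s*a)^3)*S) ≤ ((k:ℝ)-2)*((k:ℝ)-2) :=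
    mul_le_mul hψK hSK (by positivity) hK0
  have haψS : a^4*(ψ*S) ≤ 1 := by
    have h2 : (4*s^4)*(a^4*(ψ*S)) ≤ (4*s^4)*1 := by nlinarith [h1, hKK]
    exact le_of_mul_le_mul_left h2 (by positivity)
  have hA1 : 2*B^2 - (m+ψ)*(3*W-S) ≤ (m+ψ)*S := by
    nlinarith [hCS, mul_nonneg hm hW0, mul_nonneg hψ0 hW0]
  have hA2 : (a^2-t^2)^3*(2*B^2 - (m+ψ)*(3*W-S)) ≤ (a^2-t^2)^3*((m+ψ)*S) :=
    mul_le_mul_of_nonneg_left hA1 (by positivity)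
  have hA3 : (a^2-t^2)^3*((m+ψ)*S) ≤ (a^2)^3*((m+ψ)*S) := by
    apply mul_le_mul_of_nonneg_right (pow_le_pow_left₀ hc0 (by nlinarith [sq_nonneg t]) 3)
    exact mul_nonneg (by linarith) hS0
  have hmS : 0 ≤ a^3*m*(2 - a^3*S) :=
    mul_nonneg (mul_nonneg (by positivity) hm) (by linarith)
  have hψS : a^6*(ψ*S) ≤ a^2 := by
    nlinarith [haψS, pow_pos ha 2, mul_nonneg hψ0 hS0]
  have hG2a : 0 ≤ 2*a*ψ + 8*a*t*B := by
    nlinarith [mul_nonneg (by linarith : (0:ℝ) ≤ a + t) (by linarith : (0:ℝ) ≤ ψ + s*a*B),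
      mul_nonneg (by linarith : (0:ℝ) ≤ a - t) (by linarith : (0:ℝ) ≤ ψ - s*a*B),
      mul_nonneg (mul_nonneg ha.le hψ0) (by linarith : (0:ℝ) ≤ s - 4), hs]
  have hG2 : 0 ≤ (2*a*ψ + 8*a*t*B)*(a^2-t^2) := mul_nonneg hG2a hc0
  have hG3 : -(a*(3*W-S)*(a^2-t^2)^2) ≤ a*S*(a^2-t^2)^2 := by
    nlinarith [mul_nonneg (mul_nonneg ha.le hW0) (sq_nonneg (a^2-t^2))]
  have hG3b : a*S*(a^2-t^2)^2 ≤ a*S*(a^2)^2 :=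
    mul_le_mul_of_nonneg_left (pow_le_pow_left₀ hc0 (by nlinarith [sq_nonneg t]) 2) (mul_nonneg ha.le hS0)
  have hG3c : a*S*(a^2)^2 ≤ a^2*(1/4) := by nlinarith [haS, pow_pos ha 2, sq_nonneg a]
  have hmt : 0 ≤ a*m*t^2 := mul_nonneg (mul_nonneg ha.le hm) (sq_nonneg t)
  have hψt : 0 ≤ a*ψ*t^2 := mul_nonneg (mul_nonneg ha.le hψ0) (sq_nonneg t)
  linarith [hA2, hA3, hmS, hψS, hG2, hG3, hG3b, hG3c, hmt, hψt, pow_pos ha 2]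
end
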